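/- Let q be a real number with 0 < q < 1, let w₁ > 0 be real, let f be a positive integer and χ a nontrivial complex Dirichlet character modulo f. Then for every complex number s ≠ 1, L_q(s, χ | w₁) = [f]_q^{−s} · Σ_{a=1}^{f} χ(a) · ζ_{q^f}( s , a·w₁/f | w₁ ), where on the right the Barnes-type Changhee q-zeta function is formed with q replaced by q^f. -/

import Mathlib

open Finset

/-- The q-analogue `[z]_q = (1 - q^z)/(1 - q)` for a real exponent `z`. -/
noncomputable def qn (q z : ℝ) : ℝ := (1 - q ^ z) / (1 - q)

/-- The complex power `r^s := exp(s·log r)` of a positive real `r` (real logarithm). -/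
noncomputable def rpowC (r : ℝ) (s : ℂ) : ℂ := Complex.exp (s * (Real.log r : ℂ))

lemma rpowC_ne_zero (r : ℝ) (s : ℂ) : rpowC r s ≠ 0 := Complex.exp_ne_zero _

lemma rpowC_neg (r : ℝ) (s : ℂ) : rpowC r (-s) = (rpowC r s)⁻¹ := by
  simp [rpowC, ← Complex.exp_neg, neg_mul]

lemma norm_rpowC {r : ℝ} (hr : 0 < r) (s : ℂ) : ‖rpowC r s‖ = r ^ s.re := by
  rw [rpowC, Complex.norm_exp, Real.rpow_def_of_pos hr]
  congr 1
  simp [Complex.mul_re, mul_comm]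

lemma rpowC_mul {r1 r2 : ℝ} (h1 : 0 < r1) (h2 : 0 < r2) (s : ℂ) :
    rpowC (r1 * r2) s = rpowC r1 s * rpowC r2 s := by
  rw [rpowC, rpowC, rpowC, Real.log_mul h1.ne' h2.ne', ← Complex.exp_add]
  push_cast
  ring_nf

lemma qn_pos {q : ℝ} (hq0 : 0 < q) (hq1 : q < 1) {z : ℝ} (hz : 0 < z) : 0 < qn q z := by
  have h1 : q ^ z < 1 := Real.rpow_lt_one hq0.le hq1 hz
  have : (0:ℝ) < 1 - q := by linarith
  exact div_pos (by linarith) this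

lemma qn_le {q : ℝ} (hq0 : 0 < q) (hq1 : q < 1) (z : ℝ) : qn q z ≤ (1 - q)⁻¹ := by
  have h1 : (0:ℝ) ≤ q ^ z := Real.rpow_nonneg hq0.le z
  have : (0:ℝ) < 1 - q := by linarith
  rw [qn, div_le_iff₀ this]
  field_simp
  linarith

lemma qn_mono {q : ℝ} (hq0 : 0 < q) (hq1 : q < 1) {z w : ℝ} (hzw : z ≤ w) :
    qn q z ≤ qn q w := by
  have h1 : q ^ w ≤ q ^ z := Real.rpow_le_rpow_of_exponent_ge hq0 hq1.le hzw
  have : (0:ℝ) < 1 - q := by linarith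
  unfold qn
  exact (div_le_div_iff_of_pos_right (by linarith)).mpr (by linarith)

lemma summable_F (q w1 : ℝ) (hq0 : 0 < q) (hq1 : q < 1) (hw1 : 0 < w1)
    {f : ℕ} (χ : DirichletCharacter ℂ f) (s : ℂ) :
    Summable (fun n : ℕ => χ ((n + 1 : ℕ) : ZMod f) * ((q ^ (w1 * ((n : ℝ) + 1)) : ℝ) : ℂ)
      / rpowC (qn q (w1 * ((n : ℝ) + 1))) s) := by
  set r := q ^ w1 with hr
  have hr0 : 0 < r := Real.rpow_pos_of_pos hq0 _
  have hr1 : r < 1 := Real.rpow_lt_one hq0.le hq1 hw1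
  set B := max ((qn q w1) ^ (-s.re)) (((1 - q)⁻¹) ^ (-s.re)) with hB
  apply Summable.of_norm_bounded (g := fun n => (B * r) * r ^ n)
    ((summable_geometric_of_lt_one hr0.le hr1).mul_left _)
  intro n
  have hew : w1 ≤ w1 * ((n : ℝ) + 1) := by
    nlinarith [Nat.cast_nonneg (α := ℝ) n]
  have he0 : (0:ℝ) < w1 * ((n : ℝ) + 1) := lt_of_lt_of_le hw1 hew
  have hqn0 : 0 < qn q (w1 * ((n : ℝ) + 1)) := qn_pos hq0 hq1 he0
  have hχ1 : ‖χ ((n + 1 : ℕ) : ZMod f)‖ ≤ 1 := χ.norm_le_one _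
  have hq_norm : ‖((q ^ (w1 * ((n : ℝ) + 1)) : ℝ) : ℂ)‖ = r * r ^ n := by
    rw [Complex.norm_real, Real.norm_of_nonneg (Real.rpow_nonneg hq0.le _)]
    rw [Real.rpow_mul hq0.le, ← hr]
    rw [show ((n:ℝ) + 1) = ((n+1 : ℕ) : ℝ) by push_cast; ring, Real.rpow_natCast]
    ring
  have hxB : (qn q (w1 * ((n : ℝ) + 1))) ^ (-s.re) ≤ B := by
    rcases le_or_gt 0 (-s.re) with h | h
    · exact le_max_of_le_right (Real.rpow_le_rpow hqn0.le (qn_le hq0 hq1 _) h)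
    · exact le_max_of_le_left
        (Real.rpow_le_rpow_of_nonpos (qn_pos hq0 hq1 hw1) (qn_mono hq0 hq1 hew) h.le)
  have hxnn : (0:ℝ) ≤ (qn q (w1 * ((n : ℝ) + 1))) ^ (-s.re) :=
    Real.rpow_nonneg hqn0.le _
  rw [norm_div, norm_mul, norm_rpowC hqn0, hq_norm, div_eq_mul_inv,
    ← Real.rpow_neg hqn0.le]
  have hrr : (0:ℝ) < r * r ^ n := mul_pos hr0 (pow_pos hr0 n)
  calc ‖χ ((n + 1 : ℕ) : ZMod f)‖ * (r * r ^ n) * (qn q (w1 * ((n : ℝ) + 1))) ^ (-s.re)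
      ≤ 1 * (r * r ^ n) * B := by
        apply mul_le_mul _ hxB hxnn (by positivity)
        apply mul_le_mul_of_nonneg_right hχ1 hrr.le
    _ = B * r * r ^ n := by ring

/-- The Dirichlet-type Changhee q-L-function
`L_q(s,χ|w₁) = w₁·Σ_{m≥1} χ(m)·q^{w₁m}/[w₁m]_q^s`. -/
noncomputable def Lqw (q w1 : ℝ) {f : ℕ} (χ : DirichletCharacter ℂ f) (s : ℂ) : ℂ :=
  (w1 : ℂ) * ∑' m : ℕ, χ ((m + 1 : ℕ) : ZMod f) * ((q ^ (w1 * ((m : ℝ) + 1)) : ℝ) : ℂ)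
      / rpowC (qn q (w1 * ((m : ℝ) + 1))) s

/-- The Barnes-type Changhee q-zeta function (with base `Q`)
`ζ_Q(s,w|w₁) = -(1-Q)^s/((s-1)·log Q) + w₁·Σ_{m≥0} Q^{w₁m+w}/[w₁m+w]_Q^s`. -/
noncomputable def zetaQw (Q w w1 : ℝ) (s : ℂ) : ℂ :=
  -(rpowC (1 - Q) s) / ((s - 1) * (Real.log Q : ℂ))
    + (w1 : ℂ) * ∑' m : ℕ, ((Q ^ (w1 * (m : ℝ) + w) : ℝ) : ℂ)
        / rpowC (qn Q (w1 * (m : ℝ) + w)) s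

/-- Relation between the Dirichlet-type Changhee q-L-function and the Barnes-type
Changhee q-zeta function built from `q^f`:
`L_q(s,χ|w₁) = [f]_q^{-s} · Σ_{a=1}^{f} χ(a) · ζ_{q^f}(s, a·w₁/f | w₁)`. -/
theorem Lqw_eq_sum_zetaQw (q w1 : ℝ) (hq0 : 0 < q) (hq1 : q < 1) (hw1 : 0 < w1)
    (f : ℕ) (hf : 0 < f) (χ : DirichletCharacter ℂ f)
    (hχ : ∑ a ∈ range f, χ ((a + 1 : ℕ) : ZMod f) = 0)
    (s : ℂ) (hs : s ≠ 1) :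
    Lqw q w1 χ s = rpowC (qn q (f : ℝ)) (-s)
      * ∑ a ∈ range f, χ ((a + 1 : ℕ) : ZMod f)
        * zetaQw (q ^ f) (((a : ℝ) + 1) * w1 / (f : ℝ)) w1 s := by
  haveI : NeZero f := ⟨hf.ne'⟩
  have hfR : (0:ℝ) < (f : ℝ) := Nat.cast_pos.mpr hf
  have hQ0 : 0 < q ^ f := pow_pos hq0 f
  have hQ1 : q ^ f < 1 := pow_lt_one₀ hq0.le hq1 hf.ne'
  have hqf : 0 < qn q (f : ℝ) := qn_pos hq0 hq1 hfR
  set Q : ℝ := q ^ f with hQdef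
  set K : ℂ := rpowC (qn q (f : ℝ)) (-s) with hK
  set C0 : ℂ := -(rpowC (1 - Q) s) / ((s - 1) * (Real.log Q : ℂ)) with hC0
  set F : ℕ → ℂ := fun n => χ ((n + 1 : ℕ) : ZMod f) * ((q ^ (w1 * ((n : ℝ) + 1)) : ℝ) : ℂ)
      / rpowC (qn q (w1 * ((n : ℝ) + 1))) s with hF
  set G : ℕ → ℕ → ℂ := fun a m => ((Q ^ (w1 * (m : ℝ) + ((a : ℝ) + 1) * w1 / (f : ℝ)) : ℝ) : ℂ)
      / rpowC (qn Q (w1 * (m : ℝ) + ((a : ℝ) + 1) * w1 / (f : ℝ))) s with hG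
  have hFsum : Summable F := summable_F q w1 hq0 hq1 hw1 χ s
  have h1q : (1:ℝ) - q ≠ 0 := by linarith
  have h1Q : (1:ℝ) - Q ≠ 0 := by linarith
  -- the key pointwise identity
  have key : ∀ (m a : ℕ), a < f → F (m * f + a) = K * (χ ((a + 1 : ℕ) : ZMod f) * G a m) := by
    intro m a ha
    simp only [hF, hG]
    have hx0 : 0 < w1 * (m : ℝ) + ((a : ℝ) + 1) * w1 / (f : ℝ) := by positivity
    set x : ℝ := w1 * (m : ℝ) + ((a : ℝ) + 1) * w1 / (f : ℝ) with hx
    have he : w1 * (((m * f + a : ℕ) : ℝ) + 1) = (f : ℝ) * x := by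
      rw [hx]
      push_cast
      field_simp
      ring
    have hQx : q ^ ((f : ℝ) * x) = Q ^ x := by
      rw [hQdef, Real.rpow_mul hq0.le, Real.rpow_natCast]
    have hqnx : qn q ((f : ℝ) * x) = qn q (f : ℝ) * qn Q x := by
      unfold qn
      rw [hQx, Real.rpow_natCast, ← hQdef]
      field_simp
    have hQnx0 : 0 < qn Q x := qn_pos hQ0 hQ1 hx0
    have hχc : ((m * f + a + 1 : ℕ) : ZMod f) = ((a + 1 : ℕ) : ZMod f) := by
      push_cast [ZMod.natCast_self]
      ring
    rw [he, hχc, hqnx, rpowC_mul hqf hQnx0, hQx, hK, rpowC_neg]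
    have n1 := rpowC_ne_zero (qn q (f : ℝ)) s
    have n2 := rpowC_ne_zero (qn Q x) s
    field_simp
  -- rearranging the sum
  have hstep : ∑' n, F n = K * ∑ a ∈ range f, χ ((a + 1 : ℕ) : ZMod f) * ∑' m, G a m := by
    have hsum2 : Summable (fun p : ℕ × Fin f => F (p.1 * f + (p.2 : ℕ))) :=
      hFsum.comp_injective (Nat.divModEquiv f).symm.injective
    have h1 : ∑' n, F n = ∑' p : ℕ × Fin f, F (p.1 * f + (p.2 : ℕ)) :=
      (Equiv.tsum_eq (Nat.divModEquiv f).symm F).symm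
    have h2 : ∑' p : ℕ × Fin f, F (p.1 * f + (p.2 : ℕ))
        = ∑' m, ∑' a : Fin f, F (m * f + (a : ℕ)) := Summable.tsum_prod hsum2
    have h3 : ∀ m : ℕ, ∑' a : Fin f, F (m * f + (a : ℕ)) = ∑ a ∈ range f, F (m * f + a) := by
      intro m
      rw [tsum_fintype]
      exact Fin.sum_univ_eq_sum_range (fun a => F (m * f + a)) f
    have h4 : ∑' m, ∑ a ∈ range f, F (m * f + a) = ∑ a ∈ range f, ∑' m, F (m * f + a) := by
      refine Summable.tsum_finsetSum ?_
      intro a ha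
      refine hFsum.comp_injective ?_
      intro x y h
      exact Nat.eq_of_mul_eq_mul_right hf (Nat.add_right_cancel h)
    rw [h1, h2, tsum_congr h3, h4, Finset.mul_sum]
    refine Finset.sum_congr rfl ?_
    intro a ha
    rw [mem_range] at ha
    rw [tsum_congr (fun m => key m a ha), tsum_mul_left, tsum_mul_left]
  -- assembling
  have hR : ∑ a ∈ range f, χ ((a + 1 : ℕ) : ZMod f)
        * zetaQw Q (((a : ℝ) + 1) * w1 / (f : ℝ)) w1 s
      = (w1 : ℂ) * ∑ a ∈ range f, χ ((a + 1 : ℕ) : ZMod f) * ∑' m, G a m := by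
    have hZ : ∀ a ∈ range f, χ ((a + 1 : ℕ) : ZMod f)
          * zetaQw Q (((a : ℝ) + 1) * w1 / (f : ℝ)) w1 s
        = χ ((a + 1 : ℕ) : ZMod f) * C0
          + (w1 : ℂ) * (χ ((a + 1 : ℕ) : ZMod f) * ∑' m, G a m) := by
      intro a _
      show χ ((a + 1 : ℕ) : ZMod f) * (C0 + (w1 : ℂ) * ∑' m, G a m) = _
      ring
    rw [Finset.sum_congr rfl hZ, Finset.sum_add_distrib, ← Finset.sum_mul, hχ, zero_mul,
      zero_add, ← Finset.mul_sum]
  rw [show Lqw q w1 χ s = (w1 : ℂ) * ∑' n, F n from rfl, hstep, hR]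
  ring
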